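/- The number of ranked labeled tree shapes compatible with the labeled cherry perfect phylogeny (x, n−x) equals binomial(n−2, x−1)·L_x·L_{n−x} = [n!(n−2)!/2^{n−2}] / binomial(n, x), where L_m = m!(m−1)!/2^{m−1}. -/

import Mathlib

/-- A labeled perfect phylogeny: a rooted binary tree whose leaves carry sets of
sample labels. -/
inductive LPP : Type
  | leaf : Finset ℕ → LPP
  | node : LPP → LPP → LPP

namespace LPP

/-- The set of sample labels of a labeled perfect phylogeny. -/
def samples : LPP → Finset ℕ
  | leaf s => s
  | node l r => l.samples ∪ r.samples

/-- Validity: leaves carry nonempty label sets, and subtrees carry disjoint label sets. -/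
def Valid : LPP → Prop
  | leaf s => s.Nonempty
  | node l r => l.Valid ∧ r.Valid ∧ Disjoint l.samples r.samples

/-- One elementary coarsening step: collapsing a cherry (merging the label sets of two
pendant leaf edges), anywhere in the tree; children are unordered. -/
inductive Step : LPP → LPP → Prop
  | cherry (a b : Finset ℕ) : Step (node (leaf a) (leaf b)) (leaf (a ∪ b))
  | swap (s t : LPP) : Step (node s t) (node t s)
  | left {t t' : LPP} (s : LPP) : Step t t' → Step (node t s) (node t' s)
  | right {t t' : LPP} (s : LPP) : Step t t' → Step (node s t) (node s t')

/-- `π.Refines σ` iff `σ` is obtained from `π` by sequentially collapsing cherries. -/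
def Refines (π σ : LPP) : Prop := Relation.ReflTransGen Step π σ

end LPP

/-- A ranked labeled tree: rooted binary tree with leaves labeled by samples and ranks
on internal nodes (ordered children; ranked labeled tree shapes are the quotient by
`RLTree.Equiv`). -/
inductive RLTree : Type
  | leaf : ℕ → RLTree
  | node : ℕ → RLTree → RLTree → RLTree

namespace RLTree

/-- Multiset of leaf labels. -/
def leafLabels : RLTree → Multiset ℕ
  | leaf x => {x}
  | node _ l r => l.leafLabels + r.leafLabels

/-- Multiset of internal node ranks. -/
def ranks : RLTree → Multiset ℕ
  | leaf _ => 0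
  | node k l r => k ::ₘ (l.ranks + r.ranks)

/-- Ranks strictly increase away from the root, starting above the bound `b`. -/
def IncreasingFrom : ℕ → RLTree → Prop
  | _, leaf _ => True
  | b, node k l r => b < k ∧ IncreasingFrom k l ∧ IncreasingFrom k r

/-- The labeled perfect phylogeny obtained by forgetting ranks and viewing each leaf as
a singleton block. -/
def toLPP : RLTree → LPP
  | leaf x => LPP.leaf {x}
  | node _ l r => LPP.node l.toLPP r.toLPP

/-- `t.Valid s`: `t` is a ranked labeled tree whose leaves are labeled bijectively by
the sample set `s` and whose internal nodes carry the ranks `1, …, |s|-1`, each exactly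
once, increasing from the root toward the leaves. -/
def Valid (t : RLTree) (s : Finset ℕ) : Prop :=
  t.leafLabels = s.val ∧ t.ranks = (Finset.Icc 1 (s.card - 1)).val ∧
    IncreasingFrom 0 t

/-- Equality of ranked labeled trees up to reordering of children. -/
inductive Equiv : RLTree → RLTree → Prop
  | leaf (x : ℕ) : Equiv (leaf x) (leaf x)
  | node {k : ℕ} {a b c d : RLTree} :
      Equiv a c → Equiv b d → Equiv (node k a b) (node k c d)
  | swap {k : ℕ} {a b c d : RLTree} :
      Equiv a d → Equiv b c → Equiv (node k a b) (node k c d)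

end RLTree

/-- `GLcount π` is the number of ranked labeled tree shapes compatible with the labeled
perfect phylogeny `π`. -/
noncomputable def GLcount (π : LPP) : ℕ :=
  Nat.card {q : Quot RLTree.Equiv //
    ∃ t : RLTree, Quot.mk _ t = q ∧ t.Valid π.samples ∧ LPP.Refines t.toLPP π}


namespace RLTree

theorem Equiv.refl : ∀ t : RLTree, Equiv t t
  | .leaf x => .leaf x
  | .node _ l r => .node (Equiv.refl l) (Equiv.refl r)

theorem Equiv.symm' : ∀ {a b : RLTree}, Equiv a b → Equiv b a
  | _, _, .leaf x => .leaf x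
  | _, _, .node h1 h2 => .node h1.symm' h2.symm'
  | _, _, .swap h1 h2 => .swap h2.symm' h1.symm'

theorem Equiv.trans' : ∀ {a b c : RLTree}, Equiv a b → Equiv b c → Equiv a c := by
  intro a b c h1 h2
  induction h1 generalizing c with
  | leaf x => exact h2
  | node p q ih1 ih2 =>
    cases h2 with
    | node p2 q2 => exact .node (ih1 p2) (ih2 q2)
    | swap p2 q2 => exact .swap (ih1 p2) (ih2 q2)
  | swap p q ih1 ih2 =>
    cases h2 with
    | node p2 q2 => exact .swap (ih1 q2) (ih2 p2)
    | swap p2 q2 => exact .node (ih1 q2) (ih2 p2)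

theorem equivalence_equiv : Equivalence Equiv :=
  ⟨Equiv.refl, Equiv.symm', Equiv.trans'⟩

theorem mk_eq_mk_iff {a b : RLTree} :
    Quot.mk Equiv a = Quot.mk Equiv b ↔ Equiv a b := by
  rw [Quot.eq]
  exact Equivalence.eqvGen_iff equivalence_equiv

theorem Equiv.leafLabels_eq : ∀ {a b : RLTree}, Equiv a b → a.leafLabels = b.leafLabels := by
  intro a b h
  induction h with
  | leaf x => rfl
  | node p q ih1 ih2 => simp [leafLabels, ih1, ih2]
  | swap p q ih1 ih2 => simp [leafLabels, ih1, ih2, add_comm]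

theorem Equiv.ranks_eq : ∀ {a b : RLTree}, Equiv a b → a.ranks = b.ranks := by
  intro a b h
  induction h with
  | leaf x => rfl
  | node p q ih1 ih2 => simp [ranks, ih1, ih2]
  | swap p q ih1 ih2 => simp [ranks, ih1, ih2, add_comm]

theorem Equiv.increasingFrom_iff : ∀ {a b : RLTree}, Equiv a b →
    ∀ n, (IncreasingFrom n a ↔ IncreasingFrom n b) := by
  intro a b h
  induction h with
  | leaf x => intro n; rfl
  | node p q ih1 ih2 => intro n; simp [IncreasingFrom, ih1, ih2]
  | swap p q ih1 ih2 => intro n; simp [IncreasingFrom, ih1, ih2]; tauto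

theorem card_ranks_add_one : ∀ t : RLTree, t.ranks.card + 1 = t.leafLabels.card
  | .leaf x => rfl
  | .node k l r => by
    simp [ranks, leafLabels, ← card_ranks_add_one l, ← card_ranks_add_one r]; omega

theorem leafLabels_card_pos (t : RLTree) : 0 < t.leafLabels.card := by
  have := card_ranks_add_one t; omega

theorem mem_ranks_gt {t : RLTree} {b : ℕ} (h : IncreasingFrom b t) :
    ∀ k ∈ t.ranks, b < k := by
  induction t generalizing b with
  | leaf x => simp [ranks]
  | node k l r ihl ihr =>
    obtain ⟨hbk, hl, hr⟩ := h
    intro j hj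
    simp [ranks] at hj
    rcases hj with rfl | hj | hj
    · exact hbk
    · exact lt_trans hbk (ihl hl j hj)
    · exact lt_trans hbk (ihr hr j hj)

theorem increasingFrom_mono {t : RLTree} {b b' : ℕ} (hb : b' ≤ b)
    (h : IncreasingFrom b t) : IncreasingFrom b' t := by
  cases t with
  | leaf x => trivial
  | node k l r => exact ⟨lt_of_le_of_lt hb h.1, h.2.1, h.2.2⟩

theorem samples_toLPP : ∀ t : RLTree, t.toLPP.samples = t.leafLabels.toFinset
  | .leaf x => by simp [toLPP, LPP.samples, leafLabels]
  | .node k l r => by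
    simp [toLPP, LPP.samples, leafLabels, samples_toLPP l, samples_toLPP r,
      Multiset.toFinset_add]

end RLTree

namespace LPP

theorem Step.samples_eq : ∀ {a b : LPP}, Step a b → a.samples = b.samples := by
  intro a b h
  induction h with
  | cherry a b => rfl
  | swap s t => simp [samples, Finset.union_comm]
  | left s h ih => simp [samples, ih]
  | right s h ih => simp [samples, ih]

theorem Refines.samples_eq {a b : LPP} (h : Refines a b) : a.samples = b.samples := by
  induction h with
  | refl => rfl
  | tail _ h ih => exact ih.trans h.samples_eq

theorem Refines.node_left {a b : LPP} (s : LPP) (h : Refines a b) :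
    Refines (node a s) (node b s) :=
  Relation.ReflTransGen.lift (fun u => node u s) (fun _ _ h => Step.left s h) _ _ h

theorem Refines.node_right {a b : LPP} (s : LPP) (h : Refines a b) :
    Refines (node s a) (node s b) :=
  Relation.ReflTransGen.lift (fun u => node s u) (fun _ _ h => Step.right s h) _ _ h

theorem refines_leaf_samples : ∀ σ : LPP, Refines σ (leaf σ.samples)
  | leaf s => Relation.ReflTransGen.refl
  | node l r => by
    have hl := (refines_leaf_samples l).node_left r
    have hr := (refines_leaf_samples r).node_right (leaf l.samples)
    exact (hl.trans hr).tail (Step.cherry _ _)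


theorem step_node_inv {a l r : LPP} (h : Step a (node l r)) :
    ∃ l' r', a = node l' r' ∧
      ((l'.samples = l.samples ∧ r'.samples = r.samples) ∨
        (l'.samples = r.samples ∧ r'.samples = l.samples)) := by
  cases h with
  | swap s t => exact ⟨r, l, rfl, Or.inr ⟨rfl, rfl⟩⟩
  | left hst =>
    rename_i t ha
    exact ⟨t, r, rfl, Or.inl ⟨ha.samples_eq, rfl⟩⟩
  | right hst =>
    rename_i t ha
    exact ⟨l, t, rfl, Or.inl ⟨rfl, ha.samples_eq⟩⟩

theorem refines_cherry_inv {A B : Finset ℕ} {π : LPP}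
    (h : Refines π (node (leaf A) (leaf B))) :
    ∃ l r, π = node l r ∧
      ((l.samples = A ∧ r.samples = B) ∨ (l.samples = B ∧ r.samples = A)) := by
  induction h using Relation.ReflTransGen.head_induction_on with
  | refl => exact ⟨leaf A, leaf B, rfl, Or.inl ⟨rfl, rfl⟩⟩
  | head hstep _ ih =>
    obtain ⟨l, r, hpi, hlr⟩ := ih
    subst hpi
    obtain ⟨l', r', rfl, h2⟩ := step_node_inv hstep
    refine ⟨l', r', rfl, ?_⟩
    rcases h2 with ⟨h3, h4⟩ | ⟨h3, h4⟩ <;> rcases hlr with ⟨h5, h6⟩ | ⟨h5, h6⟩ <;>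
      simp [h3, h4, h5, h6]

end LPP

namespace RLTree

theorem Equiv.refines_toLPP {a b : RLTree} (h : Equiv a b) :
    LPP.Refines a.toLPP b.toLPP := by
  induction h with
  | leaf x => exact Relation.ReflTransGen.refl
  | node _ _ ih1 ih2 => exact (ih1.node_left _).trans (ih2.node_right _)
  | swap _ _ ih1 ih2 =>
    exact ((ih1.node_left _).trans (ih2.node_right _)).tail (LPP.Step.swap _ _)

theorem Equiv.valid_iff {a b : RLTree} (h : Equiv a b) (s : Finset ℕ) :
    Valid a s ↔ Valid b s := by
  simp [Valid, h.leafLabels_eq, h.ranks_eq, h.increasingFrom_iff]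

theorem nodup_toFinset_eq {m : Multiset ℕ} {A : Finset ℕ} (h : m.Nodup)
    (he : m.toFinset = A) : m = A.val := by
  rw [← he, Multiset.toFinset_val, Multiset.dedup_eq_self.mpr h]

/-- Root split characterization of refining to the cherry. -/
theorem toLPP_refines_cherry_iff {A B : Finset ℕ} {t : RLTree}
    (hnd : t.leafLabels.Nodup) :
    LPP.Refines t.toLPP (LPP.node (LPP.leaf A) (LPP.leaf B)) ↔
      ∃ k l r, t = node k l r ∧
        ((l.leafLabels = A.val ∧ r.leafLabels = B.val) ∨
          (l.leafLabels = B.val ∧ r.leafLabels = A.val)) := by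
  constructor
  · intro h
    obtain ⟨l', r', heq, hlr⟩ := LPP.refines_cherry_inv h
    cases t with
    | leaf x => exact absurd heq (by simp [toLPP])
    | node k l r =>
      refine ⟨k, l, r, rfl, ?_⟩
      simp only [toLPP] at heq
      obtain ⟨rfl, rfl⟩ : l.toLPP = l' ∧ r.toLPP = r' := by
        injection heq with h1 h2; exact ⟨h1, h2⟩
      have hndl : l.leafLabels.Nodup ∧ r.leafLabels.Nodup := by
        rw [show (node k l r).leafLabels = l.leafLabels + r.leafLabels from rfl,
          Multiset.nodup_add] at hnd
        exact ⟨hnd.1, hnd.2.1⟩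
      rw [samples_toLPP, samples_toLPP] at hlr
      rcases hlr with ⟨h1, h2⟩ | ⟨h1, h2⟩
      · exact Or.inl ⟨nodup_toFinset_eq hndl.1 h1, nodup_toFinset_eq hndl.2 h2⟩
      · exact Or.inr ⟨nodup_toFinset_eq hndl.1 h1, nodup_toFinset_eq hndl.2 h2⟩
  · rintro ⟨k, l, r, rfl, hlr⟩
    have key : ∀ u : RLTree, ∀ C : Finset ℕ, u.leafLabels = C.val →
        LPP.Refines u.toLPP (LPP.leaf C) := by
      intro u C hC
      have := LPP.refines_leaf_samples u.toLPP
      rwa [samples_toLPP, hC, Finset.val_toFinset] at this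
    show LPP.Refines (LPP.node l.toLPP r.toLPP) _
    rcases hlr with ⟨h1, h2⟩ | ⟨h1, h2⟩
    · exact ((key l A h1).node_left _).trans ((key r B h2).node_right _)
    · exact (((key l B h1).node_left _).trans ((key r A h2).node_right _)).tail
        (LPP.Step.swap _ _)

/-- Finiteness of trees with prescribed labels and ranks. -/
theorem finite_set_aux : ∀ (n : ℕ) (L K : Multiset ℕ), K.card = n →
    {t : RLTree | t.leafLabels = L ∧ t.ranks = K}.Finite := by
  intro n
  induction n using Nat.strong_induction_on with
  | _ n ih =>
  intro L K hK
  classical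
  set I : Finset (ℕ × Multiset ℕ × Multiset ℕ) :=
    (K.toFinset ×ˢ L.powerset.toFinset ×ˢ K.powerset.toFinset).filter
      (fun i => i.2.2.card < K.card ∧ i.1 ∈ K) with hI
  have hsub : {t : RLTree | t.leafLabels = L ∧ t.ranks = K} ⊆
      (RLTree.leaf '' {x | x ∈ L.toFinset}) ∪
      ⋃ i ∈ (I : Finset (ℕ × Multiset ℕ × Multiset ℕ)),
        (fun p : RLTree × RLTree => RLTree.node i.1 p.1 p.2) ''
          ({l | l.leafLabels = i.2.1 ∧ l.ranks = i.2.2} ×ˢ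
            {r | r.leafLabels = L - i.2.1 ∧ r.ranks = K.erase i.1 - i.2.2}) := by
    rintro t ⟨ht1, ht2⟩
    cases t with
    | leaf x =>
      left
      exact ⟨x, by simp [← ht1, leafLabels], rfl⟩
    | node k l r =>
      right
      simp only [leafLabels] at ht1
      simp only [ranks] at ht2
      have hkK : k ∈ K := by rw [← ht2]; exact Multiset.mem_cons_self _ _
      have herase : K.erase k = l.ranks + r.ranks := by
        rw [← ht2, Multiset.erase_cons_head]
      refine Set.mem_biUnion (x := (k, l.leafLabels, l.ranks)) ?_ ?_
      · show _ ∈ I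
        simp only [hI, Finset.mem_filter, Finset.mem_product]
        refine ⟨⟨by simpa using hkK, ?_, ?_⟩, ?_, hkK⟩
        · simp only [Multiset.mem_toFinset, Multiset.mem_powerset]
          rw [← ht1]; exact Multiset.le_add_right _ _
        · simp only [Multiset.mem_toFinset, Multiset.mem_powerset]
          rw [← ht2]
          exact le_trans (Multiset.le_add_right _ _) (Multiset.le_cons_self _ _)
        · rw [← ht2]; simp
      · refine ⟨(l, r), ⟨⟨rfl, rfl⟩, ?_, ?_⟩, rfl⟩
        · rw [← ht1]; simp
        · rw [herase]; simp
  refine Set.Finite.subset (Set.Finite.union (Set.Finite.image _ L.toFinset.finite_toSet) ?_) hsub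
  refine Set.Finite.biUnion I.finite_toSet ?_
  rintro ⟨k, Ll, Kl⟩ hi
  simp only [hI, Finset.coe_filter, Set.mem_setOf_eq, Finset.mem_product] at hi
  obtain ⟨-, hcard, hk⟩ := hi
  refine Set.Finite.image _ (Set.Finite.prod ?_ ?_)
  · exact ih Kl.card (by omega) Ll Kl rfl
  · refine ih (K.erase k - Kl).card ?_ _ _ rfl
    have h1 : (K.erase k - Kl).card ≤ (K.erase k).card :=
      Multiset.card_le_card (Multiset.sub_le_self _ _)
    have h2 : (K.erase k).card = K.card - 1 := Multiset.card_erase_of_mem hk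
    have h3 : 0 < K.card := Multiset.card_pos_iff_exists_mem.mpr ⟨k, hk⟩
    omega

end RLTree

namespace RLTree

theorem finite_of_spec (P : RLTree → Prop) (L K : Multiset ℕ)
    (h : ∀ t, P t → t.leafLabels = L ∧ t.ranks = K) : Finite {t : RLTree // P t} := by
  haveI : Finite {t : RLTree // t.leafLabels = L ∧ t.ranks = K} :=
    (finite_set_aux K.card L K rfl).to_subtype
  exact Finite.of_injective
    (fun x => (⟨x.1, h x.1 x.2⟩ : {t : RLTree // t.leafLabels = L ∧ t.ranks = K}))
    (by rintro ⟨a, ha⟩ ⟨b, hb⟩ hab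
        simp only [Subtype.mk.injEq] at hab
        exact Subtype.ext hab)

theorem nat_card_sigma {ι : Type*} [Fintype ι] (f : ι → Type*) [∀ i, Finite (f i)] :
    Nat.card (Σ i, f i) = ∑ i, Nat.card (f i) := by
  classical
  haveI : ∀ i, Fintype (f i) := fun i => Fintype.ofFinite _
  simp [Nat.card_eq_fintype_card, Fintype.card_sigma]

theorem term_eval {n j : ℕ} (h1 : 1 ≤ j) (h2 : j ≤ n - 1) (h3 : 2 ≤ n) :
    n.choose j * (n - 2).choose (j - 1) *
      (Nat.factorial j * Nat.factorial (j - 1) *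
        (Nat.factorial (n - j) * Nat.factorial (n - j - 1))) =
      Nat.factorial n * Nat.factorial (n - 2) := by
  have e1 : n.choose j * Nat.factorial j * Nat.factorial (n - j) = Nat.factorial n :=
    Nat.choose_mul_factorial_mul_factorial (by omega)
  have e2 : (n - 2).choose (j - 1) * Nat.factorial (j - 1) *
      Nat.factorial ((n - 2) - (j - 1)) = Nat.factorial (n - 2) :=
    Nat.choose_mul_factorial_mul_factorial (by omega)
  rw [show (n - 2) - (j - 1) = n - j - 1 by omega] at e2
  calc n.choose j * (n - 2).choose (j - 1) *
      (Nat.factorial j * Nat.factorial (j - 1) *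
        (Nat.factorial (n - j) * Nat.factorial (n - j - 1)))
      = (n.choose j * Nat.factorial j * Nat.factorial (n - j)) *
        ((n - 2).choose (j - 1) * Nat.factorial (j - 1) * Nat.factorial (n - j - 1)) := by
        ring
    _ = Nat.factorial n * Nat.factorial (n - 2) := by rw [e1, e2]

set_option maxHeartbeats 1000000 in
/-- The number of (ordered) ranked labeled trees with prescribed leaf set, rank set,
and lower bound. -/
theorem Mcount : ∀ (n : ℕ) (S R : Finset ℕ) (b : ℕ), S.card = n → 1 ≤ n →
    R.card = n - 1 → (∀ r ∈ R, b < r) →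
    Nat.card {t : RLTree // t.leafLabels = S.val ∧ t.ranks = R.val ∧ IncreasingFrom b t}
      = Nat.factorial n * Nat.factorial (n - 1) := by
  intro n
  induction n using Nat.strong_induction_on with
  | _ n ih =>
  intro S R b hS hn hR hb
  classical
  by_cases hn1 : n = 1
  · subst hn1
    obtain ⟨a, ha⟩ := Finset.card_eq_one.mp hS
    have hRe : R = ∅ := Finset.card_eq_zero.mp (by omega)
    subst ha; subst hRe
    have huniq : ∀ t : RLTree,
        (t.leafLabels = ({a} : Finset ℕ).val ∧ t.ranks = (∅ : Finset ℕ).val ∧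
          IncreasingFrom b t) → t = RLTree.leaf a := by
      rintro t ⟨h1, h2, -⟩
      cases t with
      | leaf x => simp only [leafLabels, Finset.singleton_val, Multiset.singleton_inj] at h1
                  rw [h1]
      | node k l r => simp [ranks] at h2
    rw [show Nat.factorial 1 * Nat.factorial (1 - 1) = 1 from rfl,
      Nat.card_eq_one_iff_unique]
    constructor
    · exact ⟨fun a1 a2 => Subtype.ext (by rw [huniq a1.1 a1.2, huniq a2.1 a2.2])⟩
    · exact ⟨⟨RLTree.leaf a, by simp [leafLabels, ranks, IncreasingFrom]⟩⟩
  · have h2n : 2 ≤ n := by omega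
    have hR0 : R.Nonempty := Finset.card_pos.mp (by omega)
    set k₀ := R.min' hR0 with hk₀
    have hk₀R : k₀ ∈ R := R.min'_mem hR0
    have hbk₀ : b < k₀ := hb _ hk₀R
    have herase_gt : ∀ j ∈ R.erase k₀, k₀ < j := by
      intro j hj
      rw [Finset.mem_erase] at hj
      exact lt_of_le_of_ne (R.min'_le j hj.2) (Ne.symm hj.1)
    set D : Finset ((_ : ℕ) × Finset ℕ × Finset ℕ) :=
      (Finset.Icc 1 (n - 1)).sigma
        (fun j => (S.powersetCard j) ×ˢ ((R.erase k₀).powersetCard (j - 1))) with hD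
    let Fib : ((_ : ℕ) × Finset ℕ × Finset ℕ) → Type := fun p =>
      {l : RLTree // l.leafLabels = p.2.1.val ∧ l.ranks = p.2.2.val ∧
        IncreasingFrom k₀ l} ×
      {r : RLTree // r.leafLabels = (S \ p.2.1).val ∧
        r.ranks = ((R.erase k₀) \ p.2.2).val ∧ IncreasingFrom k₀ r}
    have memD : ∀ p : ((_ : ℕ) × Finset ℕ × Finset ℕ), p ∈ D ↔
        ((1 ≤ p.1 ∧ p.1 ≤ n - 1) ∧ (p.2.1 ⊆ S ∧ p.2.1.card = p.1) ∧
          (p.2.2 ⊆ R.erase k₀ ∧ p.2.2.card = p.1 - 1)) := by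
      intro p
      simp [hD, Finset.mem_sigma, Finset.mem_product, Finset.mem_powersetCard,
        Finset.mem_Icc]
    -- the gluing map
    let g : (Σ p : D, Fib p.1) →
        {t : RLTree // t.leafLabels = S.val ∧ t.ranks = R.val ∧ IncreasingFrom b t} :=
      fun x => ⟨RLTree.node k₀ x.2.1.1 x.2.2.1, by
        obtain ⟨⟨⟨j, S₁, R₁⟩, hp⟩, ⟨l, hl1, hl2, hl3⟩, ⟨r, hr1, hr2, hr3⟩⟩ := x
        rw [memD] at hp
        obtain ⟨⟨hj1, hj2⟩, ⟨hS₁, hS₁c⟩, ⟨hR₁, hR₁c⟩⟩ := hp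
        refine ⟨?_, ?_, hbk₀, hl3, hr3⟩
        · show l.leafLabels + r.leafLabels = S.val
          rw [hl1, hr1, Finset.sdiff_val,
            add_tsub_cancel_of_le (Finset.val_le_iff.mpr hS₁)]
        · show k₀ ::ₘ (l.ranks + r.ranks) = R.val
          rw [hl2, hr2, Finset.sdiff_val,
            add_tsub_cancel_of_le (Finset.val_le_iff.mpr hR₁), Finset.erase_val,
            Multiset.cons_erase (by exact_mod_cast hk₀R)]⟩
    have hginj : Function.Injective g := by
      rintro ⟨⟨⟨j1, S1, R1⟩, hp1⟩, ⟨l1, hl1⟩, ⟨r1, hr1⟩⟩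
        ⟨⟨⟨j2, S2, R2⟩, hp2⟩, ⟨l2, hl2⟩, ⟨r2, hr2⟩⟩ hab
      have hval : RLTree.node k₀ l1 r1 = RLTree.node k₀ l2 r2 :=
        congrArg Subtype.val hab
      injection hval with _ hl hr
      have e1 : l1.leafLabels = S1.val := hl1.1
      have e1' : l2.leafLabels = S2.val := hl2.1
      have f1 : l1.ranks = R1.val := hl1.2.1
      have f1' : l2.ranks = R2.val := hl2.2.1
      have hS12 : S1 = S2 := Finset.val_inj.mp (by rw [← e1, ← e1', hl])
      have hR12 : R1 = R2 := Finset.val_inj.mp (by rw [← f1, ← f1', hl])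
      have hj12 : j1 = j2 := by
        have c1 : S1.card = j1 := ((memD _).mp hp1).2.1.2
        have c2 : S2.card = j2 := ((memD _).mp hp2).2.1.2
        rw [← c1, ← c2, hS12]
      subst hS12; subst hR12; subst hj12; subst hl; subst hr
      rfl
    have hgsurj : Function.Surjective g := by
      rintro ⟨t, h1, h2, h3⟩
      cases t with
      | leaf x =>
        exfalso
        have h0 : R.val = 0 := by rw [← h2]; rfl
        have hc : R.card = 0 := by rw [Finset.card_def, h0]; rfl
        omega
      | node k l r =>
        have h1' : l.leafLabels + r.leafLabels = S.val := h1
        have h2' : k ::ₘ (l.ranks + r.ranks) = R.val := h2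
        obtain ⟨hbk, hkl, hkr⟩ := h3
        have hkR : k ∈ R := by
          rw [Finset.mem_def, ← h2']; exact Multiset.mem_cons_self _ _
        have hk : k = k₀ := by
          have hkval : k₀ ∈ R.val := Finset.mem_def.mp hk₀R
          rw [← h2'] at hkval
          rcases Multiset.mem_cons.mp hkval with h | h
          · exact h.symm
          · exfalso
            have hlt : k < k₀ := by
              rcases Multiset.mem_add.mp h with h | h
              · exact mem_ranks_gt hkl _ h
              · exact mem_ranks_gt hkr _ h
            have := R.min'_le k hkR
            omega
        subst hk
        have hndS : (l.leafLabels + r.leafLabels).Nodup := by rw [h1']; exact S.nodup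
        obtain ⟨hndl, hndr, -⟩ := Multiset.nodup_add.mp hndS
        have hndR : (k₀ ::ₘ (l.ranks + r.ranks)).Nodup := by rw [h2']; exact R.nodup
        obtain ⟨hknot, hndR'⟩ := Multiset.nodup_cons.mp hndR
        obtain ⟨hndrl, hndrr, -⟩ := Multiset.nodup_add.mp hndR'
        set S₁ : Finset ℕ := ⟨l.leafLabels, hndl⟩ with hS₁def
        set R₁ : Finset ℕ := ⟨l.ranks, hndrl⟩ with hR₁def
        have hlcard : l.leafLabels.card + r.leafLabels.card = n := by
          rw [← Multiset.card_add, h1', ← Finset.card_def, hS]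
        have hlpos := leafLabels_card_pos l
        have hrpos := leafLabels_card_pos r
        have heraseval : (R.erase k₀).val = l.ranks + r.ranks := by
          rw [Finset.erase_val, ← h2', Multiset.erase_cons_head]
        have hsub1 : S₁ ⊆ S := by
          rw [← Finset.val_le_iff]
          show l.leafLabels ≤ S.val
          rw [← h1']; exact Multiset.le_add_right _ _
        have hsub2 : R₁ ⊆ R.erase k₀ := by
          rw [← Finset.val_le_iff]
          show l.ranks ≤ (R.erase k₀).val
          rw [heraseval]; exact Multiset.le_add_right _ _
        have hrankl := card_ranks_add_one l
        have hrankr := card_ranks_add_one r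
        refine ⟨⟨⟨⟨S₁.card, S₁, R₁⟩, ?_⟩, ⟨l, rfl, rfl, hkl⟩, ⟨r, ?_, ?_, hkr⟩⟩, ?_⟩
        · rw [memD]
          refine ⟨⟨?_, ?_⟩, ⟨hsub1, rfl⟩, ⟨hsub2, ?_⟩⟩
          · show 1 ≤ l.leafLabels.card; omega
          · show l.leafLabels.card ≤ n - 1; omega
          · show l.ranks.card = l.leafLabels.card - 1; omega
        · show r.leafLabels = (S \ S₁).val
          rw [Finset.sdiff_val]
          show r.leafLabels = S.val - l.leafLabels
          rw [← h1', add_tsub_cancel_left]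
        · show r.ranks = ((R.erase k₀) \ R₁).val
          rw [Finset.sdiff_val, heraseval]
          show r.ranks = (l.ranks + r.ranks) - l.ranks
          rw [add_tsub_cancel_left]
        · rfl
    have hcard := Nat.card_eq_of_bijective g ⟨hginj, hgsurj⟩
    haveI hfin1 : ∀ p : ((_ : ℕ) × Finset ℕ × Finset ℕ),
        Finite {l : RLTree // l.leafLabels = p.2.1.val ∧ l.ranks = p.2.2.val ∧
          IncreasingFrom k₀ l} :=
      fun p => finite_of_spec _ _ _ (fun t ht => ⟨ht.1, ht.2.1⟩)
    haveI hfin2 : ∀ p : ((_ : ℕ) × Finset ℕ × Finset ℕ),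
        Finite {r : RLTree // r.leafLabels = (S \ p.2.1).val ∧
          r.ranks = ((R.erase k₀) \ p.2.2).val ∧ IncreasingFrom k₀ r} :=
      fun p => finite_of_spec _ _ _ (fun t ht => ⟨ht.1, ht.2.1⟩)
    haveI hfinFib : ∀ p : D, Finite (Fib p.1) := by
      intro p
      haveI := hfin1 p.1
      haveI := hfin2 p.1
      dsimp only [Fib]
      infer_instance
    rw [← hcard, nat_card_sigma (fun p : D => Fib p.1)]
    have hterm : ∀ p : D, Nat.card (Fib p.1) =
        Nat.factorial p.1.1 * Nat.factorial (p.1.1 - 1) *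
          (Nat.factorial (n - p.1.1) * Nat.factorial (n - p.1.1 - 1)) := by
      rintro ⟨⟨j, S₁, R₁⟩, hp⟩
      obtain ⟨⟨hj1x, hj2x⟩, ⟨hS₁x, hS₁cx⟩, ⟨hR₁x, hR₁cx⟩⟩ := (memD _).mp hp
      have hj1 : 1 ≤ j := hj1x
      have hj2 : j ≤ n - 1 := hj2x
      have hS₁ : S₁ ⊆ S := hS₁x
      have hS₁c : S₁.card = j := hS₁cx
      have hR₁ : R₁ ⊆ R.erase k₀ := hR₁x
      have hR₁c : R₁.card = j - 1 := hR₁cx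
      show Nat.card (_ × _) = _
      rw [Nat.card_prod]
      congr 1
      · exact ih j (by omega) S₁ R₁ k₀ hS₁c hj1 (by rw [hR₁c]) (fun r hr => herase_gt r (hR₁ hr))
      · have hc1 : (S \ S₁).card = n - j := by
          rw [Finset.card_sdiff_of_subset hS₁, hS, hS₁c]
        have hc2 : ((R.erase k₀) \ R₁).card = n - j - 1 := by
          rw [Finset.card_sdiff_of_subset hR₁, Finset.card_erase_of_mem hk₀R, hR, hR₁c]
          omega
        exact ih (n - j) (by omega) _ _ k₀ hc1 (by omega) (by rw [hc2])
          (fun r hr => herase_gt r (Finset.mem_sdiff.mp hr).1)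
    calc ∑ p : D, Nat.card (Fib p.1)
        = ∑ p : D, (Nat.factorial p.1.1 * Nat.factorial (p.1.1 - 1) *
            (Nat.factorial (n - p.1.1) * Nat.factorial (n - p.1.1 - 1))) :=
          Finset.sum_congr rfl (fun p _ => hterm p)
      _ = ∑ p ∈ D, (Nat.factorial p.1 * Nat.factorial (p.1 - 1) *
            (Nat.factorial (n - p.1) * Nat.factorial (n - p.1 - 1))) :=
          Finset.sum_coe_sort D (fun q => Nat.factorial q.1 * Nat.factorial (q.1 - 1) *
            (Nat.factorial (n - q.1) * Nat.factorial (n - q.1 - 1)))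
      _ = ∑ j ∈ Finset.Icc 1 (n - 1), ∑ q ∈ (S.powersetCard j ×ˢ
            (R.erase k₀).powersetCard (j - 1)),
            (Nat.factorial j * Nat.factorial (j - 1) *
              (Nat.factorial (n - j) * Nat.factorial (n - j - 1))) := by
          rw [hD, Finset.sum_sigma]
      _ = ∑ j ∈ Finset.Icc 1 (n - 1), Nat.factorial n * Nat.factorial (n - 2) := by
          refine Finset.sum_congr rfl (fun j hj => ?_)
          rw [Finset.mem_Icc] at hj
          rw [Finset.sum_const, Finset.card_product, Finset.card_powersetCard,
            Finset.card_powersetCard, Finset.card_erase_of_mem hk₀R, hS, hR,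
            smul_eq_mul, show n - 1 - 1 = n - 2 by omega]
          have h := term_eval hj.1 hj.2 h2n
          simpa [mul_assoc, mul_comm, mul_left_comm] using h
      _ = Nat.factorial n * Nat.factorial (n - 1) := by
          rw [Finset.sum_const, Nat.card_Icc, smul_eq_mul]
          have h3 : n - 1 = (n - 2) + 1 := by omega
          rw [show n - 1 + 1 - 1 = n - 1 from by omega, h3, Nat.factorial_succ, ← h3]
          ring

end RLTree

namespace RLTree

theorem equiv_node_inv {t' : RLTree} {k : ℕ} {l r : RLTree}
    (h : Equiv t' (node k l r)) :
    ∃ a b, t' = node k a b ∧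
      ((Equiv a l ∧ Equiv b r) ∨ (Equiv a r ∧ Equiv b l)) := by
  cases h with
  | node h1 h2 => exact ⟨_, _, rfl, Or.inl ⟨h1, h2⟩⟩
  | swap h1 h2 => exact ⟨_, _, rfl, Or.inr ⟨h1, h2⟩⟩

theorem finite_orbit (t : RLTree) : Finite {t' : RLTree // Equiv t' t} :=
  finite_of_spec _ t.leafLabels t.ranks
    (fun u hu => ⟨hu.leafLabels_eq, hu.ranks_eq⟩)

theorem orbit_card : ∀ t : RLTree, t.leafLabels.Nodup →
    Nat.card {t' : RLTree // Equiv t' t} = 2 ^ t.ranks.card := by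
  intro t
  induction t with
  | leaf x =>
    intro _
    rw [show (leaf x).ranks.card = 0 from rfl, pow_zero,
      Nat.card_eq_one_iff_unique]
    have huniq : ∀ t' : RLTree, Equiv t' (leaf x) → t' = leaf x := by
      intro t' h; cases h; rfl
    exact ⟨⟨fun a b => Subtype.ext (by rw [huniq a.1 a.2, huniq b.1 b.2])⟩,
      ⟨⟨leaf x, Equiv.refl _⟩⟩⟩
  | node k l r ihl ihr =>
    intro hnd
    have hnd' : (l.leafLabels + r.leafLabels).Nodup := hnd
    obtain ⟨hndl, hndr, hdisj⟩ := Multiset.nodup_add.mp hnd'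
    have hne : l.leafLabels ≠ r.leafLabels := by
      intro he
      obtain ⟨y, hy⟩ := Multiset.card_pos_iff_exists_mem.mp (leafLabels_card_pos l)
      exact Multiset.disjoint_left.mp hdisj hy (he ▸ hy)
    classical
    haveI := finite_orbit l
    haveI := finite_orbit r
    let g : ({a : RLTree // Equiv a l} × {b : RLTree // Equiv b r}) ⊕
        ({a : RLTree // Equiv a r} × {b : RLTree // Equiv b l}) →
        {t' : RLTree // Equiv t' (node k l r)} :=
      fun x => match x with
      | .inl (a, b) => ⟨node k a.1 b.1, .node a.2 b.2⟩
      | .inr (a, b) => ⟨node k a.1 b.1, .swap a.2 b.2⟩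
    have key : ∀ a1 a2 : RLTree, Equiv a1 l → Equiv a2 r → a1 = a2 → False := by
      intro a1 a2 h1 h2 he
      exact hne (by rw [← h1.leafLabels_eq, he, h2.leafLabels_eq])
    have hginj : Function.Injective g := by
      rintro (⟨⟨a1, ha1⟩, ⟨b1, hb1⟩⟩ | ⟨⟨a1, ha1⟩, ⟨b1, hb1⟩⟩)
        (⟨⟨a2, ha2⟩, ⟨b2, hb2⟩⟩ | ⟨⟨a2, ha2⟩, ⟨b2, hb2⟩⟩) hab
      · have hval : node k a1 b1 = node k a2 b2 := congrArg Subtype.val hab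
        injection hval with _ h1 h2
        subst h1; subst h2; rfl
      · have hval : node k a1 b1 = node k a2 b2 := congrArg Subtype.val hab
        injection hval with _ h1 h2
        exact absurd h1 (fun h => key a1 a2 ha1 ha2 h)
      · have hval : node k a1 b1 = node k a2 b2 := congrArg Subtype.val hab
        injection hval with _ h1 h2
        exact absurd h1 (fun h => key a2 a1 ha2 ha1 h.symm)
      · have hval : node k a1 b1 = node k a2 b2 := congrArg Subtype.val hab
        injection hval with _ h1 h2
        subst h1; subst h2; rfl
    have hgsurj : Function.Surjective g := by
      rintro ⟨t', ht'⟩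
      obtain ⟨a, b, rfl, ⟨h1, h2⟩ | ⟨h1, h2⟩⟩ := equiv_node_inv ht'
      · exact ⟨.inl (⟨a, h1⟩, ⟨b, h2⟩), rfl⟩
      · exact ⟨.inr (⟨a, h1⟩, ⟨b, h2⟩), rfl⟩
    have hcard := Nat.card_eq_of_bijective g ⟨hginj, hgsurj⟩
    rw [← hcard, Nat.card_sum, Nat.card_prod, Nat.card_prod, ihl hndl, ihr hndr,
      show (node k l r).ranks.card = l.ranks.card + r.ranks.card + 1 from by
        simp [ranks]]
    rw [pow_succ, pow_add]
    ring

end RLTree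

open RLTree in
theorem glcount_key (π : LPP) :
    Nat.card {t : RLTree // t.Valid π.samples ∧ LPP.Refines t.toLPP π} =
      GLcount π * 2 ^ (π.samples.card - 1) := by
  classical
  set m := π.samples.card with hm
  have hPinv : ∀ {t t' : RLTree}, Equiv t t' →
      (t'.Valid π.samples ∧ LPP.Refines t'.toLPP π) →
      (t.Valid π.samples ∧ LPP.Refines t.toLPP π) := by
    rintro t t' he ⟨h1, h2⟩
    exact ⟨(he.valid_iff _).mpr h1, he.refines_toLPP.trans h2⟩
  haveI : Finite {t : RLTree // t.Valid π.samples ∧ LPP.Refines t.toLPP π} :=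
    finite_of_spec _ π.samples.val (Finset.Icc 1 (m - 1)).val
      (fun t ht => ⟨ht.1.1, ht.1.2.1⟩)
  let F : {t : RLTree // t.Valid π.samples ∧ LPP.Refines t.toLPP π} →
      {q : Quot RLTree.Equiv // ∃ t : RLTree, Quot.mk _ t = q ∧
        t.Valid π.samples ∧ LPP.Refines t.toLPP π} :=
    fun t => ⟨Quot.mk _ t.1, t.1, rfl, t.2⟩
  have hFsurj : Function.Surjective F := by
    rintro ⟨q, t, rfl, ht⟩; exact ⟨⟨t, ht⟩, rfl⟩
  haveI hQfin : Finite {q : Quot RLTree.Equiv // ∃ t : RLTree, Quot.mk _ t = q ∧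
      t.Valid π.samples ∧ LPP.Refines t.toLPP π} := Finite.of_surjective F hFsurj
  haveI hQfty : Fintype {q : Quot RLTree.Equiv // ∃ t : RLTree, Quot.mk _ t = q ∧
      t.Valid π.samples ∧ LPP.Refines t.toLPP π} := Fintype.ofFinite _
  have hc1 : Nat.card {t : RLTree // t.Valid π.samples ∧ LPP.Refines t.toLPP π} =
      ∑ q : {q : Quot RLTree.Equiv // ∃ t : RLTree, Quot.mk _ t = q ∧
        t.Valid π.samples ∧ LPP.Refines t.toLPP π},
        Nat.card {x : {t : RLTree // t.Valid π.samples ∧ LPP.Refines t.toLPP π} //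
          F x = q} := by
    rw [← Nat.card_congr (Equiv.sigmaFiberEquiv F), nat_card_sigma]
  have hfib : ∀ q : {q : Quot RLTree.Equiv // ∃ t : RLTree, Quot.mk _ t = q ∧
      t.Valid π.samples ∧ LPP.Refines t.toLPP π},
      Nat.card {x : {t : RLTree // t.Valid π.samples ∧ LPP.Refines t.toLPP π} //
        F x = q} = 2 ^ (m - 1) := by
    rintro ⟨q, hq⟩
    obtain ⟨t0, hq0, hP0⟩ := hq
    let g : {t' : RLTree // Equiv t' t0} →
        {x : {t : RLTree // t.Valid π.samples ∧ LPP.Refines t.toLPP π} //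
          F x = ⟨q, t0, hq0, hP0⟩} :=
      fun u => ⟨⟨u.1, hPinv u.2 hP0⟩,
        Subtype.ext (show Quot.mk _ u.1 = q from by
          rw [← hq0]; exact Quot.sound u.2)⟩
    have hginj : Function.Injective g := by
      intro u1 u2 h12
      exact Subtype.ext (congrArg (fun z => z.1.1) h12)
    have hgsurj : Function.Surjective g := by
      rintro ⟨⟨t, hPt⟩, hFt⟩
      have hmk : Quot.mk RLTree.Equiv t = q := congrArg Subtype.val hFt
      have heq : Equiv t t0 := mk_eq_mk_iff.mp (by rw [hmk, ← hq0])
      exact ⟨⟨t, heq⟩, Subtype.ext (Subtype.ext rfl)⟩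
    rw [← Nat.card_eq_of_bijective g ⟨hginj, hgsurj⟩]
    have hnd : t0.leafLabels.Nodup := by rw [hP0.1.1]; exact π.samples.nodup
    rw [orbit_card t0 hnd]
    congr 1
    have : t0.ranks = (Finset.Icc 1 (m - 1)).val := hP0.1.2.1
    rw [this, ← Finset.card_def, Nat.card_Icc]
    omega
  rw [hc1, Finset.sum_congr rfl (fun q _ => hfib q), Finset.sum_const,
    Finset.card_univ, smul_eq_mul, ← Nat.card_eq_fintype_card]
  rfl

set_option maxHeartbeats 1000000 in
open RLTree in
theorem cherry_count (n x : ℕ) (A B : Finset ℕ)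
    (hx : 1 ≤ x) (hxn : x < n) (h2n : 2 ≤ n)
    (hA : A.card = x) (hB : B.card = n - x) (hAB : Disjoint A B) :
    Nat.card {t : RLTree //
        t.Valid (LPP.node (LPP.leaf A) (LPP.leaf B)).samples ∧
        LPP.Refines t.toLPP (LPP.node (LPP.leaf A) (LPP.leaf B))} =
      2 * (n - 2).choose (x - 1) *
        (Nat.factorial x * Nat.factorial (x - 1)) *
        (Nat.factorial (n - x) * Nat.factorial (n - x - 1)) := by
  classical
  have hnx1 : 1 ≤ n - x := by omega
  have hs : (A ∪ B).card = n := by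
    rw [Finset.card_union_of_disjoint hAB, hA, hB]; omega
  have hsampl : (LPP.node (LPP.leaf A) (LPP.leaf B)).samples = A ∪ B := rfl
  have hvalsum : A.val + B.val = (A ∪ B).val := by
    rw [← Finset.disjUnion_eq_union A B hAB]
    rfl
  have hvalsumB : B.val + A.val = (A ∪ B).val := by rw [add_comm]; exact hvalsum
  have hABne : A.val ≠ B.val := by
    intro h
    have hAeqB : A = B := Finset.val_inj.mp h
    have : A = ∅ := by have h0 := disjoint_self.mp (hAeqB ▸ hAB); rw [hAeqB]; exact h0
    rw [this] at hA
    simp at hA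
    omega
  have h1mem : (1 : ℕ) ∈ Finset.Icc 1 (n - 1) := by
    rw [Finset.mem_Icc]; omega
  have hIoc : Finset.Ioc (1 : ℕ) (n - 1) = Finset.Icc 2 (n - 1) := by
    rw [← Finset.Icc_add_one_left_eq_Ioc]; rfl
  have hIccval : (1 : ℕ) ::ₘ (Finset.Icc 2 (n - 1)).val = (Finset.Icc 1 (n - 1)).val := by
    calc (1 : ℕ) ::ₘ (Finset.Icc 2 (n - 1)).val
        = 1 ::ₘ ((Finset.Icc 1 (n - 1)).erase 1).val := by
          rw [Finset.Icc_erase_left, hIoc]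
      _ = 1 ::ₘ (Finset.Icc 1 (n - 1)).val.erase 1 := by rw [Finset.erase_val]
      _ = (Finset.Icc 1 (n - 1)).val := Multiset.cons_erase (Finset.mem_def.mp h1mem)
  have hIcc2gt : ∀ j ∈ Finset.Icc 2 (n - 1), 1 < j := by
    intro j hj; rw [Finset.mem_Icc] at hj; omega
  have hIcc2card : (Finset.Icc 2 (n - 1)).card = n - 2 := by
    rw [Nat.card_Icc]; omega
  -- the two index sets
  set D1 : Finset (Finset ℕ) := (Finset.Icc 2 (n - 1)).powersetCard (x - 1) with hD1
  set D2 : Finset (Finset ℕ) := (Finset.Icc 2 (n - 1)).powersetCard (n - x - 1) with hD2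
  let FibL : Finset ℕ → Finset ℕ → Type := fun C p =>
    {l : RLTree // l.leafLabels = C.val ∧ l.ranks = p.val ∧ IncreasingFrom 1 l}
  -- generic builder
  have hbuild : ∀ (p : Finset ℕ), p ⊆ Finset.Icc 2 (n - 1) →
      ∀ (l r : RLTree) (C Dd : Finset ℕ), C.val + Dd.val = (A ∪ B).val →
      ((C = A ∧ Dd = B) ∨ (C = B ∧ Dd = A)) →
      l.leafLabels = C.val → l.ranks = p.val → IncreasingFrom 1 l →
      r.leafLabels = Dd.val → r.ranks = ((Finset.Icc 2 (n - 1)) \ p).val →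
      IncreasingFrom 1 r →
      ((node 1 l r).Valid (LPP.node (LPP.leaf A) (LPP.leaf B)).samples ∧
        LPP.Refines (node 1 l r).toLPP (LPP.node (LPP.leaf A) (LPP.leaf B))) := by
    intro p hp l r C Dd hsum hCD hl1 hl2 hl3 hr1 hr2 hr3
    have hlab : (node 1 l r).leafLabels = (A ∪ B).val := by
      show l.leafLabels + r.leafLabels = _
      rw [hl1, hr1, hsum]
    refine ⟨⟨hlab, ?_, ?_⟩, ?_⟩
    · show (1 : ℕ) ::ₘ (l.ranks + r.ranks) = _
      rw [hl2, hr2, Finset.sdiff_val,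
        add_tsub_cancel_of_le (Finset.val_le_iff.mpr hp)]
      rw [hsampl, hs, hIccval]
    · exact ⟨Nat.zero_lt_one, hl3, hr3⟩
    · have hnd : (node 1 l r).leafLabels.Nodup := by
        rw [hlab]; exact (A ∪ B).nodup
      refine (toLPP_refines_cherry_iff hnd).mpr ⟨1, l, r, rfl, ?_⟩
      rcases hCD with ⟨rfl, rfl⟩ | ⟨rfl, rfl⟩
      · exact Or.inl ⟨hl1, hr1⟩
      · exact Or.inr ⟨hl1, hr1⟩
  let g : ((Σ p : D1, FibL A p.1 × FibL B ((Finset.Icc 2 (n - 1)) \ p.1)) ⊕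
      (Σ p : D2, FibL B p.1 × FibL A ((Finset.Icc 2 (n - 1)) \ p.1))) →
      {t : RLTree //
        t.Valid (LPP.node (LPP.leaf A) (LPP.leaf B)).samples ∧
        LPP.Refines t.toLPP (LPP.node (LPP.leaf A) (LPP.leaf B))} :=
    fun z => match z with
    | .inl ⟨p, lr⟩ => ⟨node 1 lr.1.1 lr.2.1,
        hbuild p.1 (Finset.mem_powersetCard.mp p.2).1 lr.1.1 lr.2.1 A B hvalsum
          (Or.inl ⟨rfl, rfl⟩) lr.1.2.1 lr.1.2.2.1 lr.1.2.2.2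
          lr.2.2.1 lr.2.2.2.1 lr.2.2.2.2⟩
    | .inr ⟨p, lr⟩ => ⟨node 1 lr.1.1 lr.2.1,
        hbuild p.1 (Finset.mem_powersetCard.mp p.2).1 lr.1.1 lr.2.1 B A hvalsumB
          (Or.inr ⟨rfl, rfl⟩) lr.1.2.1 lr.1.2.2.1 lr.1.2.2.2
          lr.2.2.1 lr.2.2.2.1 lr.2.2.2.2⟩
  have hginj : Function.Injective g := by
    rintro (⟨⟨p1, hp1⟩, ⟨l1, hl1⟩, ⟨r1, hr1⟩⟩ | ⟨⟨p1, hp1⟩, ⟨l1, hl1⟩, ⟨r1, hr1⟩⟩)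
      (⟨⟨p2, hp2⟩, ⟨l2, hl2⟩, ⟨r2, hr2⟩⟩ | ⟨⟨p2, hp2⟩, ⟨l2, hl2⟩, ⟨r2, hr2⟩⟩) hab
    · have hval : node 1 l1 r1 = node 1 l2 r2 := congrArg Subtype.val hab
      injection hval with _ h1 h2
      have hp12 : p1 = p2 := Finset.val_inj.mp (by rw [← hl1.2.1, ← hl2.2.1, h1])
      subst hp12; subst h1; subst h2; rfl
    · have hval : node 1 l1 r1 = node 1 l2 r2 := congrArg Subtype.val hab
      injection hval with _ h1 h2
      exact absurd (by rw [← hl1.1, h1, hl2.1] : A.val = B.val) hABne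
    · have hval : node 1 l1 r1 = node 1 l2 r2 := congrArg Subtype.val hab
      injection hval with _ h1 h2
      exact absurd (by rw [← hl2.1, ← h1, hl1.1] : A.val = B.val) (by exact fun h => hABne h)
    · have hval : node 1 l1 r1 = node 1 l2 r2 := congrArg Subtype.val hab
      injection hval with _ h1 h2
      have hp12 : p1 = p2 := Finset.val_inj.mp (by rw [← hl1.2.1, ← hl2.2.1, h1])
      subst hp12; subst h1; subst h2; rfl
  have hgsurj : Function.Surjective g := by
    rintro ⟨t, hval, href⟩
    have hnd : t.leafLabels.Nodup := by rw [hval.1]; exact _root_.Finset.nodup _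
    obtain ⟨k, l, r, rfl, hsplit⟩ := (toLPP_refines_cherry_iff hnd).mp href
    obtain ⟨h1, h2, h3⟩ := hval
    have h1' : l.leafLabels + r.leafLabels = (A ∪ B).val := h1
    have h2' : k ::ₘ (l.ranks + r.ranks) = (Finset.Icc 1 (n - 1)).val := by
      have := h2
      rwa [hsampl, hs] at this
    obtain ⟨hk0, hkl, hkr⟩ := h3
    have hk1 : k = 1 := by
      have hkmem : k ∈ Finset.Icc 1 (n - 1) := by
        rw [Finset.mem_def, ← h2']; exact Multiset.mem_cons_self _ _
      have hk1le : 1 ≤ k := (Finset.mem_Icc.mp hkmem).1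
      have h1val : (1 : ℕ) ∈ (Finset.Icc 1 (n - 1)).val := Finset.mem_def.mp h1mem
      rw [← h2'] at h1val
      rcases Multiset.mem_cons.mp h1val with h | h
      · omega
      · exfalso
        have : k < 1 := by
          rcases Multiset.mem_add.mp h with h | h
          · exact mem_ranks_gt hkl _ h
          · exact mem_ranks_gt hkr _ h
        omega
    subst hk1
    have hranks : l.ranks + r.ranks = (Finset.Icc 2 (n - 1)).val := by
      have hcons : (1 : ℕ) ::ₘ (l.ranks + r.ranks) =
          (1 : ℕ) ::ₘ (Finset.Icc 2 (n - 1)).val := by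
        rw [h2', hIccval]
      exact (Multiset.cons_inj_right 1).mp hcons
    have hndR : (l.ranks + r.ranks).Nodup := by
      rw [hranks]; exact (Finset.Icc 2 (n - 1)).nodup
    obtain ⟨hndrl, hndrr, -⟩ := Multiset.nodup_add.mp hndR
    have hsubl : l.ranks ≤ (Finset.Icc 2 (n - 1)).val := by
      rw [← hranks]; exact Multiset.le_add_right _ _
    have hcompl : r.ranks = ((Finset.Icc 2 (n - 1)) \ ⟨l.ranks, hndrl⟩).val := by
      rw [Finset.sdiff_val]
      show r.ranks = (Finset.Icc 2 (n - 1)).val - l.ranks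
      rw [← hranks, add_tsub_cancel_left]
    rcases hsplit with ⟨hla, hrb⟩ | ⟨hlb, hra⟩
    · have hpm : (⟨l.ranks, hndrl⟩ : Finset ℕ) ∈ D1 := by
        rw [hD1, Finset.mem_powersetCard]
        constructor
        · rw [← Finset.val_le_iff]; exact hsubl
        · show l.ranks.card = x - 1
          have := card_ranks_add_one l
          rw [hla] at this
          rw [← Finset.card_def, hA] at this
          omega
      exact ⟨.inl ⟨⟨⟨l.ranks, hndrl⟩, hpm⟩, ⟨l, hla, rfl, hkl⟩,
        ⟨r, hrb, hcompl, hkr⟩⟩, Subtype.ext rfl⟩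
    · have hpm : (⟨l.ranks, hndrl⟩ : Finset ℕ) ∈ D2 := by
        rw [hD2, Finset.mem_powersetCard]
        constructor
        · rw [← Finset.val_le_iff]; exact hsubl
        · show l.ranks.card = n - x - 1
          have := card_ranks_add_one l
          rw [hlb] at this
          rw [← Finset.card_def, hB] at this
          omega
      exact ⟨.inr ⟨⟨⟨l.ranks, hndrl⟩, hpm⟩, ⟨l, hlb, rfl, hkl⟩,
        ⟨r, hra, hcompl, hkr⟩⟩, Subtype.ext rfl⟩
  -- finiteness
  haveI hfinFib : ∀ C p : Finset ℕ, Finite (FibL C p) := by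
    intro C p
    exact finite_of_spec _ C.val p.val (fun t ht => ⟨ht.1, ht.2.1⟩)
  haveI hfin1 : ∀ p : D1, Finite (FibL A p.1 × FibL B ((Finset.Icc 2 (n - 1)) \ p.1)) := by
    intro p; haveI := hfinFib A p.1; haveI := hfinFib B ((Finset.Icc 2 (n - 1)) \ p.1)
    infer_instance
  haveI hfin2 : ∀ p : D2, Finite (FibL B p.1 × FibL A ((Finset.Icc 2 (n - 1)) \ p.1)) := by
    intro p; haveI := hfinFib B p.1; haveI := hfinFib A ((Finset.Icc 2 (n - 1)) \ p.1)
    infer_instance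
  rw [← Nat.card_eq_of_bijective g ⟨hginj, hgsurj⟩, Nat.card_sum,
    nat_card_sigma (fun p : D1 => FibL A p.1 × FibL B ((Finset.Icc 2 (n - 1)) \ p.1)),
    nat_card_sigma (fun p : D2 => FibL B p.1 × FibL A ((Finset.Icc 2 (n - 1)) \ p.1))]
  have hterm1 : ∀ p : D1, Nat.card (FibL A p.1 × FibL B ((Finset.Icc 2 (n - 1)) \ p.1)) =
      Nat.factorial x * Nat.factorial (x - 1) *
        (Nat.factorial (n - x) * Nat.factorial (n - x - 1)) := by
    rintro ⟨p, hp⟩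
    obtain ⟨hsub, hcard⟩ := Finset.mem_powersetCard.mp hp
    rw [Nat.card_prod]
    congr 1
    · exact Mcount x A p 1 hA hx hcard (fun j hj => hIcc2gt j (hsub hj))
    · have hc : ((Finset.Icc 2 (n - 1)) \ p).card = n - x - 1 := by
        rw [Finset.card_sdiff_of_subset hsub, hIcc2card, hcard]; omega
      have := Mcount (n - x) B ((Finset.Icc 2 (n - 1)) \ p) 1 hB hnx1
        (by rw [hc]) (fun j hj => hIcc2gt j (Finset.mem_sdiff.mp hj).1)
      rwa [show n - x - 1 = n - x - 1 from rfl] at this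
  have hterm2 : ∀ p : D2, Nat.card (FibL B p.1 × FibL A ((Finset.Icc 2 (n - 1)) \ p.1)) =
      Nat.factorial (n - x) * Nat.factorial (n - x - 1) *
        (Nat.factorial x * Nat.factorial (x - 1)) := by
    rintro ⟨p, hp⟩
    obtain ⟨hsub, hcard⟩ := Finset.mem_powersetCard.mp hp
    rw [Nat.card_prod]
    congr 1
    · exact Mcount (n - x) B p 1 hB hnx1 (by rw [hcard]) (fun j hj => hIcc2gt j (hsub hj))
    · have hc : ((Finset.Icc 2 (n - 1)) \ p).card = x - 1 := by
        rw [Finset.card_sdiff_of_subset hsub, hIcc2card, hcard]; omega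
      exact Mcount x A ((Finset.Icc 2 (n - 1)) \ p) 1 hA hx (by rw [hc])
        (fun j hj => hIcc2gt j (Finset.mem_sdiff.mp hj).1)
  rw [Finset.sum_congr rfl (fun p _ => hterm1 p), Finset.sum_congr rfl (fun p _ => hterm2 p),
    Finset.sum_const, Finset.sum_const, Finset.card_univ, Finset.card_univ,
    smul_eq_mul, smul_eq_mul]
  have hcD1 : Fintype.card D1 = (n - 2).choose (x - 1) := by
    rw [Fintype.card_coe, hD1, Finset.card_powersetCard, hIcc2card]
  have hcD2 : Fintype.card D2 = (n - 2).choose (x - 1) := by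
    rw [Fintype.card_coe, hD2, Finset.card_powersetCard, hIcc2card]
    rw [show n - x - 1 = (n - 2) - (x - 1) by omega]
    exact Nat.choose_symm (by omega)
  rw [hcD1, hcD2]
  ring

/-- The number of ranked labeled tree shapes compatible with the labeled cherry perfect
phylogeny `(x, n-x)` (one leaf carrying a fixed set `A` of `x` samples, the other its
complement `B` of `n-x` samples) equals `C(n-2, x-1) L_x L_{n-x}`, which equals
`[n!(n-2)!/2^{n-2}] / C(n,x)`, where `L_m = m!(m-1)!/2^{m-1}`. -/
theorem rankedLabeled_compatible_cherry (n x : ℕ) (A B : Finset ℕ) (L : ℕ → ℕ)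
    (hL : ∀ m : ℕ, 1 ≤ m → L m * 2 ^ (m - 1) = Nat.factorial m * Nat.factorial (m - 1))
    (hx : 1 ≤ x) (hxn : x < n)
    (hA : A.card = x) (hB : B.card = n - x) (hAB : Disjoint A B) :
    GLcount (LPP.node (LPP.leaf A) (LPP.leaf B)) =
      (n - 2).choose (x - 1) * L x * L (n - x) ∧
    GLcount (LPP.node (LPP.leaf A) (LPP.leaf B)) * 2 ^ (n - 2) * n.choose x =
      Nat.factorial n * Nat.factorial (n - 2) := by
  have h2n : 2 ≤ n := by omega
  have hnx1 : 1 ≤ n - x := by omega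
  have hmcard : (LPP.node (LPP.leaf A) (LPP.leaf B)).samples.card = n := by
    show (A ∪ B).card = n
    rw [Finset.card_union_of_disjoint hAB, hA, hB]; omega
  set G := GLcount (LPP.node (LPP.leaf A) (LPP.leaf B)) with hGdef
  have hkey := glcount_key (LPP.node (LPP.leaf A) (LPP.leaf B))
  rw [hmcard] at hkey
  have hcnt := cherry_count n x A B hx hxn h2n hA hB hAB
  have hG : G * 2 ^ (n - 1) =
      2 * (n - 2).choose (x - 1) *
        (Nat.factorial x * Nat.factorial (x - 1)) *
        (Nat.factorial (n - x) * Nat.factorial (n - x - 1)) := by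
    rw [← hkey, hcnt]
  have hpos : 0 < 2 ^ (n - 1) := Nat.pow_pos (by omega)
  have hLx := hL x hx
  have hLnx := hL (n - x) hnx1
  have hpow : (2 : ℕ) ^ (n - 1) = 2 ^ (x - 1) * 2 ^ (n - x - 1) * 2 := by
    rw [← pow_add, ← pow_succ]
    congr 1
    omega
  constructor
  · apply Nat.eq_of_mul_eq_mul_right hpos
    calc G * 2 ^ (n - 1)
        = 2 * (n - 2).choose (x - 1) *
            (Nat.factorial x * Nat.factorial (x - 1)) *
            (Nat.factorial (n - x) * Nat.factorial (n - x - 1)) := hG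
      _ = (n - 2).choose (x - 1) * (Nat.factorial x * Nat.factorial (x - 1)) *
            (Nat.factorial (n - x) * Nat.factorial ((n - x) - 1)) * 2 := by ring
      _ = (n - 2).choose (x - 1) * (L x * 2 ^ (x - 1)) *
            (L (n - x) * 2 ^ (n - x - 1)) * 2 := by rw [hLx, hLnx]
      _ = (n - 2).choose (x - 1) * L x * L (n - x) *
            (2 ^ (x - 1) * 2 ^ (n - x - 1) * 2) := by ring
      _ = (n - 2).choose (x - 1) * L x * L (n - x) * 2 ^ (n - 1) := by rw [← hpow]
  · apply Nat.eq_of_mul_eq_mul_right hpos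
    have e3 : n.choose x * Nat.factorial x * Nat.factorial (n - x) = Nat.factorial n :=
      Nat.choose_mul_factorial_mul_factorial (le_of_lt hxn)
    have e4 : (n - 2).choose (x - 1) * Nat.factorial (x - 1) *
        Nat.factorial (n - x - 1) = Nat.factorial (n - 2) := by
      have h := Nat.choose_mul_factorial_mul_factorial
        (show x - 1 ≤ n - 2 by omega)
      rwa [show (n - 2) - (x - 1) = n - x - 1 by omega] at h
    have hpow2 : 2 * 2 ^ (n - 2) = 2 ^ (n - 1) := by
      rw [show n - 1 = (n - 2) + 1 by omega, pow_succ]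
      ring
    calc G * 2 ^ (n - 2) * n.choose x * 2 ^ (n - 1)
        = (G * 2 ^ (n - 1)) * (2 ^ (n - 2) * n.choose x) := by ring
      _ = (2 * (n - 2).choose (x - 1) *
            (Nat.factorial x * Nat.factorial (x - 1)) *
            (Nat.factorial (n - x) * Nat.factorial (n - x - 1))) *
            (2 ^ (n - 2) * n.choose x) := by rw [hG]
      _ = ((n - 2).choose (x - 1) * Nat.factorial (x - 1) * Nat.factorial (n - x - 1)) *
            (n.choose x * Nat.factorial x * Nat.factorial (n - x)) *
            (2 * 2 ^ (n - 2)) := by ring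
      _ = Nat.factorial (n - 2) * Nat.factorial n * 2 ^ (n - 1) := by
            rw [e3, e4, hpow2]
      _ = Nat.factorial n * Nat.factorial (n - 2) * 2 ^ (n - 1) := by ring
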